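/- Let a be an integer coprime to p. The power series F_a(T) = 1/T - a/((1+T)^a - 1) lies in ℤ_p[[T]]. -/

import Mathlib

open PowerSeries

lemma constCoeff_one_add_X_pow (R : Type*) [CommRing R] (a : ℕ) :
    constantCoeff (R := R) ((1 + X) ^ a) = 1 := by
  simp

lemma coeff_one_one_add_X_pow (R : Type*) [CommRing R] (a : ℕ) :
    coeff (R := R) 1 ((1 + X) ^ a) = a := by
  induction a with
  | zero => simp
  | succ n ih =>
      rw [pow_succ, mul_add, mul_one, map_add, ih, mul_comm,
        show (1 : ℕ) = 0 + 1 from rfl, PowerSeries.coeff_succ_X_mul,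
        PowerSeries.coeff_zero_eq_constantCoeff, constCoeff_one_add_X_pow]
      push_cast; ring

/-- **Integrality of the power series `F_a`.**
Let `a` be an integer coprime to `p`.  The power series
`F_a(T) = 1/T - a/((1+T)^a - 1)` lies in `ℤ_p[[T]]`; equivalently, there is a power series
`F ∈ ℤ_p[[T]]` with `T·((1+T)^a - 1)·F = ((1+T)^a - 1) - a·T`. -/
theorem F_a_integral (p : ℕ) [Fact p.Prime] (a : ℕ) (ha : Nat.Coprime a p) :
    ∃ F : PowerSeries ℤ_[p],
      PowerSeries.X * ((1 + PowerSeries.X) ^ a - 1) * F =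
        ((1 + PowerSeries.X) ^ a - 1) - (a : PowerSeries ℤ_[p]) * PowerSeries.X := by
  set u : PowerSeries ℤ_[p] := (1 + X) ^ a - 1 with hu
  have hu0 : constantCoeff (R := ℤ_[p]) u = 0 := by
    simp [hu, constCoeff_one_add_X_pow]
  obtain ⟨v, hv⟩ := (PowerSeries.X_dvd_iff).mpr hu0
  have hv0 : constantCoeff (R := ℤ_[p]) v = (a : ℤ_[p]) := by
    have h1 : coeff (R := ℤ_[p]) 1 u = (a : ℤ_[p]) := by
      simp [hu, coeff_one_one_add_X_pow]
    rw [hv] at h1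
    rwa [PowerSeries.coeff_succ_X_mul, PowerSeries.coeff_zero_eq_constantCoeff] at h1
  -- a is a unit in ℤ_[p]
  have hunit : IsUnit ((a : ℤ_[p])) := by
    by_contra hcon
    have hlt := PadicInt.not_isUnit_iff.mp hcon
    have : (p : ℤ) ∣ (a : ℤ) := by
      have := (PadicInt.norm_int_lt_one_iff_dvd (p := p) (a : ℤ)).mp (by push_cast at hlt ⊢; exact hlt)
      exact this
    have hpd : p ∣ a := Int.ofNat_dvd.mp this
    exact (Nat.Prime.coprime_iff_not_dvd (Fact.out)).mp ha.symm hpd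
  have hvunit : IsUnit v := by
    rw [PowerSeries.isUnit_iff_constantCoeff, hv0]; exact hunit
  obtain ⟨V, hV⟩ := hvunit
  -- v - a has zero constant coefficient
  have hw0 : constantCoeff (R := ℤ_[p]) (v - (a : PowerSeries ℤ_[p])) = 0 := by
    simp [hv0]
  obtain ⟨w, hw⟩ := (PowerSeries.X_dvd_iff).mpr hw0
  refine ⟨(↑V⁻¹ : PowerSeries ℤ_[p]) * w, ?_⟩
  have hvw : v * ((↑V⁻¹ : PowerSeries ℤ_[p]) * w) = w := by
    rw [← mul_assoc, ← hV, ← Units.val_mul, mul_inv_cancel, Units.val_one, one_mul]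
  calc X * u * ((↑V⁻¹ : PowerSeries ℤ_[p]) * w)
      = X * (X * (v * ((↑V⁻¹ : PowerSeries ℤ_[p]) * w))) := by rw [hv]; ring
    _ = X * (X * w) := by rw [hvw]
    _ = X * (v - (a : PowerSeries ℤ_[p])) := by rw [hw]
    _ = u - (a : PowerSeries ℤ_[p]) * X := by rw [mul_sub, ← hv]; ring
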